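/- Let λ, μ be closed Lagrangian subspaces of H forming a Fredholm pair. Then the Souriau map S_λ(μ) = −τ_μ ∘ τ_λ is a unitary operator on H_J, and Id + S_λ(μ) = Id − τ_μ∘τ_λ is a Fredholm operator on H_J. -/

import Mathlib

set_option linter.unusedSectionVars false
set_option maxHeartbeats 1000000

open Module RealInnerProductSpace

variable {H : Type*} [NormedAddCommGroup H] [InnerProductSpace ℝ H] [CompleteSpace H]

/-- A closed Lagrangian subspace of the real symplectic Hilbert space `H` with symplectic
form `ω(x,y) = ⟪J x, y⟫`: a closed subspace which equals its own `ω`-annihilator. -/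
def IsLagrangian (J : H →L[ℝ] H) (lam : Submodule ℝ H) : Prop :=
  IsClosed (lam : Set H) ∧ ∀ x : H, x ∈ lam ↔ ∀ y ∈ lam, ⟪J x, y⟫ = 0

/-- The pair `(lam, mu)` is a Fredholm pair of subspaces. -/
def IsFredholmPair (lam mu : Submodule ℝ H) : Prop :=
  FiniteDimensional ℝ ↥(lam ⊓ mu) ∧ IsClosed ((lam ⊔ mu : Submodule ℝ H) : Set H) ∧
    FiniteDimensional ℝ (H ⧸ (lam ⊔ mu))

/-- A bounded real-linear operator is Fredholm. -/
def IsFredholmR (T : H →L[ℝ] H) : Prop :=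
  FiniteDimensional ℝ (LinearMap.ker (T : H →ₗ[ℝ] H)) ∧ IsClosed (LinearMap.range (T : H →ₗ[ℝ] H) : Set H) ∧
    FiniteDimensional ℝ (H ⧸ LinearMap.range (T : H →ₗ[ℝ] H))

/-- The orthogonal projection onto a closed subspace, as an operator `H → H`. -/
noncomputable def projCLM (lam : Submodule ℝ H) [CompleteSpace lam] : H →L[ℝ] H :=
  lam.subtypeL.comp (lam.orthogonalProjectionOnto)

/-- The conjugation `τ_λ = 2P(λ) − Id` determined by the real structure `λ`. -/
noncomputable def conjOf (lam : Submodule ℝ H) [CompleteSpace lam] : H →L[ℝ] H :=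
  (2 : ℝ) • projCLM lam - 1

namespace Souriau

section Proj

variable (lam : Submodule ℝ H) [CompleteSpace lam]

lemma projCLM_apply (x : H) : projCLM lam x = (lam.orthogonalProjectionOnto x : H) := rfl

lemma projCLM_mem (x : H) : projCLM lam x ∈ lam := (lam.orthogonalProjectionOnto x).2

lemma projCLM_eq_self {x : H} (h : x ∈ lam) : projCLM lam x = x := by
  exact lam.starProjection_eq_self_iff.2 h

lemma sub_projCLM_mem (x : H) : x - projCLM lam x ∈ lamᗮ :=
  lam.sub_starProjection_mem_orthogonal x

lemma projCLM_eq_zero {x : H} (h : x ∈ lamᗮ) : projCLM lam x = 0 := by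
  rw [projCLM_apply, Submodule.orthogonalProjectionOnto_apply_of_mem_orthogonal h]; rfl

lemma projCLM_idem (x : H) : projCLM lam (projCLM lam x) = projCLM lam x :=
  projCLM_eq_self lam (projCLM_mem lam x)

lemma projCLM_eq_of {u x : H} (hu : u ∈ lam) (hx : x - u ∈ lamᗮ) : projCLM lam x = u := by
  have h := lam.eq_starProjection_of_mem_orthogonal hu hx
  exact h

lemma conjOf_apply (x : H) : conjOf lam x = (2:ℝ) • projCLM lam x - x := by
  simp [conjOf]

lemma conjOf_mem {x : H} (h : x ∈ lam) : conjOf lam x = x := by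
  rw [conjOf_apply, projCLM_eq_self lam h, two_smul]; abel

lemma conjOf_orth {x : H} (h : x ∈ lamᗮ) : conjOf lam x = -x := by
  rw [conjOf_apply, projCLM_eq_zero lam h, smul_zero]; abel

lemma conjOf_conjOf (x : H) : conjOf lam (conjOf lam x) = x := by
  simp only [conjOf_apply, map_sub, map_smul, projCLM_idem]; module

lemma norm_conjOf (x : H) : ‖conjOf lam x‖ = ‖x‖ := by
  set a := projCLM lam x with ha
  have hab : ⟪a, x - a⟫ = 0 :=
    Submodule.inner_right_of_mem_orthogonal (projCLM_mem lam x) (sub_projCLM_mem lam x)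
  have h1 : conjOf lam x = a - (x - a) := by rw [conjOf_apply, two_smul]; abel
  have h2 : x = a + (x - a) := by abel
  have e1 : ‖a - (x - a)‖ ^ 2 = ‖a‖^2 - 2 * ⟪a, x-a⟫ + ‖x - a‖^2 := norm_sub_sq_real a (x - a)
  have e2 : ‖a + (x - a)‖ ^ 2 = ‖a‖^2 + 2 * ⟪a, x-a⟫ + ‖x - a‖^2 := norm_add_sq_real a (x - a)
  have : ‖conjOf lam x‖ ^ 2 = ‖x‖ ^ 2 := by rw [h1]; nth_rewrite 2 [h2]; rw [e1, e2, hab]; ring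
  nlinarith [norm_nonneg (conjOf lam x), norm_nonneg x]

lemma conjOf_inj : Function.Injective (conjOf lam) := by
  intro a b h
  have := congrArg (conjOf lam) h
  rwa [conjOf_conjOf, conjOf_conjOf] at this

end Proj

section Lagrangian

variable (J : H →L[ℝ] H)

lemma JJ (hJ2 : J ∘L J = -1) (x : H) : J (J x) = -x := by
  have := ContinuousLinearMap.ext_iff.1 hJ2 x
  simpa using this

lemma J_inj (hJ2 : J ∘L J = -1) : Function.Injective J := by
  intro a b h
  have : J (J a) = J (J b) := congrArg J h
  rw [JJ J hJ2, JJ J hJ2] at this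
  exact neg_injective this

lemma lagrangian_orth (hJ2 : J ∘L J = -1) {lam : Submodule ℝ H} (hlam : IsLagrangian J lam) :
    lamᗮ = lam.map (J : H →ₗ[ℝ] H) := by
  ext z
  rw [Submodule.mem_orthogonal, Submodule.mem_map]
  constructor
  · intro hz
    refine ⟨-(J z), ?_, by simp [map_neg, JJ J hJ2]⟩
    rw [(hlam.2 _)]
    intro y hy
    rw [map_neg, JJ J hJ2, neg_neg, real_inner_comm]
    exact hz y hy
  · rintro ⟨x, hx, rfl⟩
    intro u hu
    rw [real_inner_comm]
    exact (hlam.2 x).1 hx u hu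

lemma projCLM_J (hJ2 : J ∘L J = -1) {lam : Submodule ℝ H} [CompleteSpace lam]
    (hlam : IsLagrangian J lam) (x : H) :
    projCLM lam (J x) = J x - J (projCLM lam x) := by
  have horth := lagrangian_orth J hJ2 hlam
  apply projCLM_eq_of
  · have h1 : x - projCLM lam x ∈ lamᗮ := sub_projCLM_mem lam x
    rw [horth] at h1
    obtain ⟨w, hw, hwe⟩ := h1
    rw [ContinuousLinearMap.coe_coe] at hwe
    have h2 : J x - J (projCLM lam x) = J (x - projCLM lam x) := (map_sub J x _).symm
    rw [h2, ← hwe, JJ J hJ2]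
    exact lam.neg_mem hw
  · have h3 : J x - (J x - J (projCLM lam x)) = J (projCLM lam x) := by abel
    rw [h3, horth]
    exact ⟨_, projCLM_mem lam x, rfl⟩

lemma conjOf_J (hJ2 : J ∘L J = -1) {lam : Submodule ℝ H} [CompleteSpace lam]
    (hlam : IsLagrangian J lam) (x : H) :
    conjOf lam (J x) = - J (conjOf lam x) := by
  rw [conjOf_apply, conjOf_apply, projCLM_J J hJ2 hlam, map_sub, map_smul]
  module

end Lagrangian

end Souriau

open Souriau in
/-- For closed Lagrangian subspaces `λ, μ` forming a Fredholm pair, the Souriau map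
`S_λ(μ) = −τ_μ ∘ τ_λ` is a unitary operator on `H_J` (an isometric bijection commuting with
`J`), and `Id + S_λ(μ) = Id − τ_μ∘τ_λ` is a Fredholm operator on `H_J`. -/
theorem souriau_unitary_and_fredholm
    (J : H →L[ℝ] H) (hJ2 : J ∘L J = -1)
    (hJorth : ∀ x y : H, ⟪J x, J y⟫ = ⟪x, y⟫)
    (lam mu : Submodule ℝ H) (hlam : IsLagrangian J lam) (hmu : IsLagrangian J mu)
    [CompleteSpace lam] [CompleteSpace mu]
    (hpair : IsFredholmPair lam mu) :
    (∀ x : H, ‖(-(conjOf mu ∘L conjOf lam)) x‖ = ‖x‖) ∧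
      Function.Bijective (-(conjOf mu ∘L conjOf lam)) ∧
      (-(conjOf mu ∘L conjOf lam)) ∘L J = J ∘L (-(conjOf mu ∘L conjOf lam)) ∧
      IsFredholmR (1 + -(conjOf mu ∘L conjOf lam)) := by
  refine ⟨?_, ?_, ?_, ?_⟩
  · -- isometry
    intro x
    simp only [ContinuousLinearMap.neg_apply, ContinuousLinearMap.comp_apply, norm_neg]
    rw [norm_conjOf, norm_conjOf]
  · -- bijective
    have hli : Function.LeftInverse (fun y => -(conjOf lam (conjOf mu y)))
        (-(conjOf mu ∘L conjOf lam)) := by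
      intro x
      simp only [Pi.neg_apply, ContinuousLinearMap.neg_apply, ContinuousLinearMap.comp_apply,
        map_neg, neg_neg, conjOf_conjOf]
    have hri : Function.RightInverse (fun y => -(conjOf lam (conjOf mu y)))
        (-(conjOf mu ∘L conjOf lam)) := by
      intro x
      simp only [Pi.neg_apply, ContinuousLinearMap.neg_apply, ContinuousLinearMap.comp_apply,
        map_neg, neg_neg, conjOf_conjOf]
    exact ⟨hli.injective, hri.surjective⟩
  · -- commutes with J
    ext x
    simp only [ContinuousLinearMap.comp_apply, ContinuousLinearMap.neg_apply, map_neg]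
    rw [conjOf_J J hJ2 hlam, map_neg, conjOf_J J hJ2 hmu, neg_neg]
  · -- Fredholm
    set T : H →L[ℝ] H := 1 + -(conjOf mu ∘L conjOf lam) with hTdef
    have hmuo : muᗮ = mu.map (J : H →ₗ[ℝ] H) := lagrangian_orth J hJ2 hmu
    have hlamo : lamᗮ = lam.map (J : H →ₗ[ℝ] H) := lagrangian_orth J hJ2 hlam
    have hJinj : Function.Injective (J : H →ₗ[ℝ] H) := J_inj J hJ2
    -- the key pointwise formula  T x = 2 τ_μ (P_μ x - P_λ x)
    have hT : ∀ x : H, T x = (2:ℝ) • conjOf mu (projCLM mu x - projCLM lam x) := by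
      intro x
      simp only [hTdef, ContinuousLinearMap.add_apply, ContinuousLinearMap.one_apply,
        ContinuousLinearMap.neg_apply, ContinuousLinearMap.comp_apply,
        conjOf_apply, map_sub, map_smul, projCLM_idem]
      module
    set M : Submodule ℝ H := lam ⊔ mu with hM
    set N : Submodule ℝ H := M.map (J : H →ₗ[ℝ] H) with hN
    set A : Submodule ℝ H := mu ⊓ N with hA
    set B : Submodule ℝ H := muᗮ ⊓ M with hB
    -- J as a continuous linear equivalence
    set eJ : H ≃L[ℝ] H := ContinuousLinearEquiv.equivOfInverse J (-J)
      (fun x => by simp [JJ J hJ2]) (fun x => by simp [JJ J hJ2]) with heJ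
    have hMclosed : IsClosed (M : Set H) := hpair.2.1
    have hNset : (N : Set H) = ⇑eJ '' (M : Set H) := by
      rw [hN, Submodule.map_coe]; rfl
    have hNclosed : IsClosed (N : Set H) := by
      rw [hNset]
      exact eJ.toHomeomorph.isClosedMap _ hMclosed
    have hAclosed : IsClosed (A : Set H) := by
      rw [hA, Submodule.coe_inf]
      exact hmu.1.inter hNclosed
    have hBclosed : IsClosed (B : Set H) := by
      rw [hB, Submodule.coe_inf]
      exact (Submodule.isClosed_orthogonal mu).inter hMclosed
    -- kernel
    have hker : LinearMap.ker (T : H →ₗ[ℝ] H) ≤ (lam ⊓ mu) ⊔ (lam ⊓ mu).map (J : H →ₗ[ℝ] H) := by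
      intro x hx
      have hx0 : T x = 0 := LinearMap.mem_ker.1 hx
      rw [hT x] at hx0
      have h1 : conjOf mu (projCLM mu x - projCLM lam x) = 0 := by
        rcases smul_eq_zero.1 hx0 with h | h
        · norm_num at h
        · exact h
      have h2 : projCLM mu x - projCLM lam x = 0 :=
        conjOf_inj mu (h1.trans (map_zero (conjOf mu)).symm)
      have heq : projCLM mu x = projCLM lam x := sub_eq_zero.1 h2
      have hu : projCLM lam x ∈ lam ⊓ mu := ⟨projCLM_mem lam x, heq ▸ projCLM_mem mu x⟩
      have hxu : x - projCLM lam x ∈ (lam ⊓ mu).map (J : H →ₗ[ℝ] H) := by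
        have h3 : x - projCLM lam x ∈ lamᗮ := sub_projCLM_mem lam x
        have h4 : x - projCLM lam x ∈ muᗮ := by rw [← heq]; exact sub_projCLM_mem mu x
        rw [hlamo] at h3; rw [hmuo] at h4
        rw [Submodule.map_inf _ hJinj]
        exact ⟨h3, h4⟩
      simpa using Submodule.add_mem_sup hu hxu
    haveI hfd1 : FiniteDimensional ℝ ↥(lam ⊓ mu) := hpair.1
    have hkerfd : FiniteDimensional ℝ (LinearMap.ker (T : H →ₗ[ℝ] H)) :=
      Submodule.finiteDimensional_of_le hker
    -- range
    have hrange : LinearMap.range (T : H →ₗ[ℝ] H) = A ⊔ B := by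
      apply le_antisymm
      · rintro z ⟨x, rfl⟩
        set a' : H := projCLM mu (x - projCLM lam x) with ha'
        set b' : H := projCLM lam x - projCLM mu (projCLM lam x) with hb'
        have hb'o : b' ∈ muᗮ := sub_projCLM_mem mu (projCLM lam x)
        have ha'mu : a' ∈ mu := projCLM_mem mu _
        have hsplit : projCLM mu x - projCLM lam x = a' - b' := by
          rw [ha', hb', map_sub]; abel
        have hTx : T x = (2:ℝ) • a' + (2:ℝ) • b' := by
          rw [hT x, hsplit, map_sub, conjOf_mem mu ha'mu, conjOf_orth mu hb'o, sub_neg_eq_add,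
            smul_add]
        have ha'A : a' ∈ A := by
          refine ⟨ha'mu, ?_⟩
          have hw1 : x - projCLM lam x ∈ N := by
            have := sub_projCLM_mem lam x
            rw [hlamo] at this
            exact Submodule.map_mono le_sup_left this
          have hw2 : (x - projCLM lam x) - projCLM mu (x - projCLM lam x) ∈ N := by
            have := sub_projCLM_mem mu (x - projCLM lam x)
            rw [hmuo] at this
            exact Submodule.map_mono le_sup_right this
          have hrw : a' = (x - projCLM lam x) -
              ((x - projCLM lam x) - projCLM mu (x - projCLM lam x)) := by
            rw [ha']; abel
          rw [hrw]
          exact N.sub_mem hw1 hw2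
        have hb'B : b' ∈ B := by
          refine ⟨hb'o, ?_⟩
          exact M.sub_mem (Submodule.mem_sup_left (projCLM_mem lam x))
            (Submodule.mem_sup_right (projCLM_mem mu (projCLM lam x)))
        rw [ContinuousLinearMap.coe_coe, hTx]
        exact Submodule.add_mem_sup (A.smul_mem _ ha'A) (B.smul_mem _ hb'B)
      · rw [sup_le_iff]
        constructor
        · rintro a ⟨hamu, haN⟩
          obtain ⟨c, hc, hce⟩ := haN
          obtain ⟨p, hp, q, hq, hpq⟩ := Submodule.mem_sup.1 hc
          rw [ContinuousLinearMap.coe_coe] at hce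
          refine ⟨(1/2 : ℝ) • (J p), ?_⟩
          have hPl : projCLM lam (J p) = 0 := by
            apply projCLM_eq_zero
            rw [hlamo]
            exact ⟨p, hp, rfl⟩
          have hPm : projCLM mu (J p) = a := by
            apply projCLM_eq_of _ hamu
            have : J p - a = -(J q) := by
              rw [← hce, ← hpq, map_add]; abel
            rw [this, hmuo]
            exact Submodule.neg_mem _ ⟨q, hq, rfl⟩
          rw [map_smul, ContinuousLinearMap.coe_coe, hT (J p), hPl, hPm, sub_zero, conjOf_mem mu hamu, smul_smul]
          norm_num
        · rintro b ⟨hbo, hbM⟩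
          obtain ⟨p, hp, q, hq, hpq⟩ := Submodule.mem_sup.1 hbM
          refine ⟨(1/2 : ℝ) • p, ?_⟩
          have hPl : projCLM lam p = p := projCLM_eq_self lam hp
          have hPm : projCLM mu p = -q := by
            apply projCLM_eq_of _ (mu.neg_mem hq)
            have : p - -q = b := by rw [← hpq]; abel
            rw [this]; exact hbo
          have hdiff : projCLM mu p - projCLM lam p = -b := by
            rw [hPl, hPm, ← hpq]; abel
          rw [map_smul, ContinuousLinearMap.coe_coe, hT p, hdiff, map_neg, conjOf_orth mu hbo, neg_neg, smul_smul]
          norm_num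
    -- decomposition of membership in A ⊔ B
    have hdec : ∀ x : H, x ∈ A ⊔ B ↔ projCLM mu x ∈ A ∧ x - projCLM mu x ∈ B := by
      intro x
      constructor
      · intro hx
        obtain ⟨a, ha, b, hb, rfl⟩ := Submodule.mem_sup.1 hx
        have hPa : projCLM mu a = a := projCLM_eq_self mu ha.1
        have hPb : projCLM mu b = 0 := projCLM_eq_zero mu hb.1
        have hP : projCLM mu (a + b) = a := by rw [map_add, hPa, hPb, add_zero]
        refine ⟨by rw [hP]; exact ha, ?_⟩
        rw [hP]
        simpa using hb
      · rintro ⟨h1, h2⟩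
        simpa using Submodule.add_mem_sup h1 h2
    -- range is closed
    have hrclosed : IsClosed ((A ⊔ B : Submodule ℝ H) : Set H) := by
      have hset : ((A ⊔ B : Submodule ℝ H) : Set H) =
          (⇑(projCLM mu) ⁻¹' A) ∩ ((fun x => x - projCLM mu x) ⁻¹' B) := by
        ext x
        simpa [Set.mem_inter_iff] using hdec x
      rw [hset]
      exact (hAclosed.preimage (projCLM mu).continuous).inter
        (hBclosed.preimage (continuous_id.sub (projCLM mu).continuous))
    -- finite codimension
    haveI hMfd : FiniteDimensional ℝ (H ⧸ M) := hpair.2.2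
    haveI hNfd : FiniteDimensional ℝ (H ⧸ N) := by
      have eqJ : Submodule.map (eJ.toLinearEquiv : H →ₗ[ℝ] H) M = N := by
        rw [hN]; rfl
      exact (Submodule.Quotient.equiv M N eJ.toLinearEquiv eqJ).finiteDimensional
    have hqfd : FiniteDimensional ℝ (H ⧸ (A ⊔ B)) := by
      set f : H →ₗ[ℝ] (H ⧸ N) × (H ⧸ M) :=
        (N.mkQ.comp (projCLM mu : H →ₗ[ℝ] H)).prod
          (M.mkQ.comp (LinearMap.id - (projCLM mu : H →ₗ[ℝ] H))) with hf
      have hkerf : LinearMap.ker f = A ⊔ B := by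
        ext x
        rw [LinearMap.mem_ker]
        have hfx : f x = (N.mkQ (projCLM mu x), M.mkQ (x - projCLM mu x)) := by
          simp [hf, LinearMap.sub_apply]
        rw [hfx, Prod.mk_eq_zero, Submodule.mkQ_apply, Submodule.mkQ_apply,
          Submodule.Quotient.mk_eq_zero, Submodule.Quotient.mk_eq_zero]
        rw [hdec x]
        constructor
        · rintro ⟨h1, h2⟩
          exact ⟨⟨projCLM_mem mu x, h1⟩, ⟨sub_projCLM_mem mu x, h2⟩⟩
        · rintro ⟨h1, h2⟩
          exact ⟨h1.2, h2.2⟩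
      rw [← hkerf]
      exact f.quotKerEquivRange.symm.finiteDimensional
    refine ⟨hkerfd, ?_, ?_⟩
    · rw [hrange]; exact hrclosed
    · rw [hrange]; exact hqfd
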